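/- Let (X,‖·‖) be a real normed space whose norm is strictly convex in the sense that ‖a+b‖ = ‖a‖+‖b‖ with a ≠ 0 and b ≠ 0 implies a = ξ b for some ξ > 0 (equivalently, X is a strictly convex space). Let n ≥ 2 and v_1,…,v_n ∈ X be points that do not all lie on a single affine line. Then the function f(u) := Σ_{i=1}^n ‖u−v_i‖ is strictly convex on X, i.e. f(λu+(1−λ)v) < λf(u)+(1−λ)f(v) for all u ≠ v in X and λ ∈ (0,1). -/
import Mathlib


open Finset

theorem stmt_10 {X : Type*} [NormedAddCommGroup X] [NormedSpace ℝ X]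
    (hsc : ∀ a b : X, a ≠ 0 → b ≠ 0 → ‖a + b‖ = ‖a‖ + ‖b‖ →
      ∃ ξ : ℝ, 0 < ξ ∧ a = ξ • b)
    (n : ℕ) (hn : 2 ≤ n) (v : Fin n → X)
    (hcol : ¬ ∃ a b : X, ∀ i : Fin n, ∃ t : ℝ, v i = t • a + (1 - t) • b) :
    ∀ u w : X, u ≠ w → ∀ l : ℝ, 0 < l → l < 1 →
      (∑ i, ‖(l • u + (1 - l) • w) - v i‖) <
        l * (∑ i, ‖u - v i‖) + (1 - l) * (∑ i, ‖w - v i‖) := by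
  intro u w huw l hl0 hl1
  have hl1' : (0:ℝ) < 1 - l := by linarith
  have hdecomp : ∀ i : Fin n, (l • u + (1 - l) • w) - v i
      = l • (u - v i) + (1 - l) • (w - v i) := by
    intro i
    module
  have hle : ∀ i : Fin n,
      ‖(l • u + (1 - l) • w) - v i‖ ≤ l * ‖u - v i‖ + (1 - l) * ‖w - v i‖ := by
    intro i
    rw [hdecomp i]
    calc ‖l • (u - v i) + (1 - l) • (w - v i)‖
        ≤ ‖l • (u - v i)‖ + ‖(1 - l) • (w - v i)‖ := norm_add_le _ _
      _ = l * ‖u - v i‖ + (1 - l) * ‖w - v i‖ := by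
          rw [norm_smul, norm_smul, Real.norm_eq_abs, Real.norm_eq_abs,
            abs_of_pos hl0, abs_of_pos hl1']
  -- there is an index with strict inequality
  have hstrict : ∃ i : Fin n,
      ‖(l • u + (1 - l) • w) - v i‖ < l * ‖u - v i‖ + (1 - l) * ‖w - v i‖ := by
    by_contra h
    push_neg at h
    apply hcol
    refine ⟨u, w, fun i => ?_⟩
    have heq : ‖l • (u - v i) + (1 - l) • (w - v i)‖
        = ‖l • (u - v i)‖ + ‖(1 - l) • (w - v i)‖ := by
      have h1 := hle i
      have h2 := h i
      have : ‖(l • u + (1 - l) • w) - v i‖ = l * ‖u - v i‖ + (1 - l) * ‖w - v i‖ :=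
        le_antisymm h1 h2
      rw [hdecomp i] at this
      rw [this, norm_smul, norm_smul, Real.norm_eq_abs, Real.norm_eq_abs,
        abs_of_pos hl0, abs_of_pos hl1']
    by_cases hu : u = v i
    · exact ⟨1, by rw [← hu]; simp⟩
    by_cases hw : w = v i
    · exact ⟨0, by rw [← hw]; simp⟩
    have ha : l • (u - v i) ≠ 0 := by
      simp [smul_eq_zero, sub_eq_zero, hu, ne_of_gt hl0]
    have hb : (1 - l) • (w - v i) ≠ 0 := by
      simp [smul_eq_zero, sub_eq_zero, hw, ne_of_gt hl1']
    obtain ⟨ξ, hξ, hab⟩ := hsc _ _ ha hb heq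
    set c : ℝ := ξ * (1 - l) / l with hc
    have hcpos : 0 < c := by positivity
    have hab' : l • (u - v i) = (ξ * (1 - l)) • (w - v i) := by rw [hab, smul_smul]
    have hcu : u - v i = c • (w - v i) := by
      have h2 := congrArg (fun x => l⁻¹ • x) hab'
      simp only [smul_smul, inv_mul_cancel₀ (ne_of_gt hl0), one_smul] at h2
      rw [h2, hc]
      congr 1
      field_simp
    have hc1 : c ≠ 1 := by
      intro h1
      rw [h1, one_smul] at hcu
      apply huw
      have h3 := congrArg (fun x => x + v i) hcu
      simpa using h3
    have hc1' : (1 : ℝ) - c ≠ 0 := by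
      intro h1; apply hc1; linarith
    refine ⟨(1 - c)⁻¹, ?_⟩
    have hvi : (1 - c) • v i = u - c • w := by
      have : u - v i - c • (w - v i) = 0 := by rw [hcu]; simp
      have h2 : u - c • w - (1 - c) • v i = 0 := by
        rw [← this]; module
      linear_combination (norm := module) -h2
    have := congrArg (fun x => (1 - c)⁻¹ • x) hvi
    simp only [smul_smul, inv_mul_cancel₀ hc1', one_smul] at this
    rw [this]
    rw [smul_sub, smul_smul]
    congr 1
    field_simp
    module
  -- conclude
  obtain ⟨j, hj⟩ := hstrict
  calc (∑ i, ‖(l • u + (1 - l) • w) - v i‖)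
      < ∑ i, (l * ‖u - v i‖ + (1 - l) * ‖w - v i‖) :=
        Finset.sum_lt_sum (fun i _ => hle i) ⟨j, Finset.mem_univ j, hj⟩
    _ = l * (∑ i, ‖u - v i‖) + (1 - l) * (∑ i, ‖w - v i‖) := by
        rw [Finset.sum_add_distrib, Finset.mul_sum, Finset.mul_sum]
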